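/- Let f: A → M_n(B) be a homomorphism of k-algebras, where k is a field. Then f is a ring epimorphism if and only if the two-sided ideal I_f of the coproduct (free product over k) B *_k k⟨(v_{ij})_{i,j=1}^n⟩ generated by the entries of the matrix commutators V·f(a) − f(a)·V (for all a ∈ A, where V = (v_{ij})) contains the elements v_{ii} − v_{jj}, v_{i'j'} (for i' ≠ j'), and b·v_{ii} − v_{ii}·b, for all i, j, i' ≠ j' ∈ {1,…,n} and all b ∈ B. -/

import Mathlib

universe u

/-- `f : A → B` is an epimorphism in the category of rings. -/
def IsRingEpi {A B : Type u} [Ring A] [Ring B] (f : A →+* B) : Prop :=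
  ∀ ⦃T : Type u⦄ [Ring T], ∀ g₁ g₂ : B →+* T, g₁.comp f = g₂.comp f → g₁ = g₂

/-- The ideal `I_f` of the coproduct `C = B *_k k⟨v_{ij}⟩`: the two-sided ideal generated by the
entries of the matrix commutators `V·f(a) − f(a)·V` for all `a : A`. -/
def commutatorIdeal {k A B C : Type u} [Field k]
    [Ring A] [Algebra k A] [Ring B] [Algebra k B] [Ring C] [Algebra k C] {n : ℕ}
    (ιB : B →ₐ[k] C) (V : Fin n → Fin n → C)
    (f : A →ₐ[k] Matrix (Fin n) (Fin n) B) : TwoSidedIdeal C :=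
  TwoSidedIdeal.span
    {x : C | ∃ (a : A) (i j : Fin n),
      x = ∑ l, V i l * ιB (f a l j) - ∑ l, ιB (f a i l) * V l j}

open Matrix in
private lemma std_mul_diag {R : Type*} [NonAssocSemiring R] {m : Type*} [Fintype m]
    [DecidableEq m] (a b : m) (x : R) (d : m → R) :
    single a b x * diagonal d = single a b (x * d b) := by
  ext u v
  rw [Matrix.mul_diagonal]
  simp only [Matrix.single, Matrix.of_apply]
  by_cases h1 : a = u <;> by_cases h2 : b = v <;> simp [h1, h2]

open Matrix in
private lemma diag_mul_std {R : Type*} [NonAssocSemiring R] {m : Type*} [Fintype m]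
    [DecidableEq m] (a b : m) (x : R) (d : m → R) :
    diagonal d * single a b x = single a b (d a * x) := by
  ext u v
  rw [Matrix.diagonal_mul]
  simp only [Matrix.single, Matrix.of_apply]
  by_cases h1 : a = u <;> by_cases h2 : b = v <;> simp [h1, h2]

open Matrix in
private lemma sum_std {R : Type*} [AddCommMonoid R] {m : Type*} [Fintype m] [DecidableEq m]
    {ι : Type*} (s : Finset ι) (a b : m) (t : ι → R) :
    ∑ l ∈ s, single a b (t l) = single a b (∑ l ∈ s, t l) := by
  ext u v
  rw [Matrix.sum_apply]
  simp only [Matrix.single, Matrix.of_apply]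
  by_cases h : a = u ∧ b = v <;> simp [h]

open Matrix in
private lemma one_eq_sum_std {R : Type*} [NonAssocSemiring R] {m : Type*} [Fintype m]
    [DecidableEq m] :
    (1 : Matrix m m R) = ∑ a, single a a (1 : R) := by
  ext u v
  rw [Matrix.sum_apply]
  simp only [Matrix.single, Matrix.of_apply, Matrix.one_apply]
  by_cases h : u = v
  · subst h; simp
  · rw [if_neg h]
    refine (Finset.sum_eq_zero fun a _ => ?_).symm
    rw [if_neg]
    rintro ⟨rfl, rfl⟩
    exact h rfl

open Matrix in
private lemma sum_std_left {R : Type*} [NonAssocSemiring R] {m : Type*} [Fintype m]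
    [DecidableEq m] (c : Matrix m m R) (j p : m) :
    ∑ l, single l p (c l j) = c * single j p 1 := by
  ext u v
  rw [Matrix.sum_apply]
  by_cases h : v = p
  · subst h
    rw [Matrix.mul_single_apply_same]
    rw [Finset.sum_eq_single u]
    · simp [Matrix.single]
    · intro l _ hl
      simp only [Matrix.single, Matrix.of_apply]
      rw [if_neg]; rintro ⟨rfl, -⟩; exact hl rfl
    · intro h; exact absurd (Finset.mem_univ u) h
  · rw [Matrix.mul_single_apply_of_ne 1 j p u v h]
    refine Finset.sum_eq_zero fun l _ => ?_
    simp only [Matrix.single, Matrix.of_apply]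
    rw [if_neg]; rintro ⟨-, rfl⟩; exact h rfl

open Matrix in
private lemma sum_std_right {R : Type*} [NonAssocSemiring R] {m : Type*} [Fintype m]
    [DecidableEq m] (c : Matrix m m R) (i p : m) :
    ∑ l, single p l (c i l) = single p i 1 * c := by
  ext u v
  rw [Matrix.sum_apply]
  by_cases h : u = p
  · subst h
    rw [Matrix.single_mul_apply_same]
    rw [Finset.sum_eq_single v]
    · simp [Matrix.single]
    · intro l _ hl
      simp only [Matrix.single, Matrix.of_apply]
      rw [if_neg]; rintro ⟨-, rfl⟩; exact hl rfl
    · intro h; exact absurd (Finset.mem_univ v) h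
  · rw [Matrix.single_mul_apply_of_ne 1 p i u v h]
    refine Finset.sum_eq_zero fun l _ => ?_
    simp only [Matrix.single, Matrix.of_apply]
    rw [if_neg]; rintro ⟨rfl, -⟩; exact h rfl

open Matrix in
private lemma std_map {R S : Type*} [NonAssocSemiring R] [NonAssocSemiring S] {m : Type*}
    [DecidableEq m] (φ : R →+* S) (a b : m) (r : R) :
    (single a b r).map φ = single a b (φ r) := by
  ext u v
  simp only [Matrix.map_apply, Matrix.single, Matrix.of_apply]
  by_cases h : a = u ∧ b = v <;> simp [h]

open Matrix in
private lemma aux_rel {k A B C : Type u} [Field k]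
    [Ring A] [Algebra k A] [Ring B] [Algebra k B] [Ring C] [Algebra k C] {n : ℕ}
    (ιB : B →ₐ[k] C) (V : Fin n → Fin n → C)
    (hUP : ∀ (D : Type u) [Ring D] [Algebra k D] (gB : B →ₐ[k] D) (w : Fin n → Fin n → D),
      ∃! h : C →ₐ[k] D, h.comp ιB = gB ∧ ∀ i j, h (V i j) = w i j)
    (f : A →ₐ[k] Matrix (Fin n) (Fin n) B)
    (h1 : ∀ i j : Fin n, V i i - V j j ∈ commutatorIdeal ιB V f)
    (h2 : ∀ i j : Fin n, i ≠ j → V i j ∈ commutatorIdeal ιB V f)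
    (h3 : ∀ (b : B) (i : Fin n), ιB b * V i i - V i i * ιB b ∈ commutatorIdeal ιB V f)
    (T : Type u) [Ring T] [Algebra k T]
    (g1 g2 : Matrix (Fin n) (Fin n) B →+* T)
    (hg1 : ∀ c : k, g1 (algebraMap k (Matrix (Fin n) (Fin n) B) c) = algebraMap k T c)
    (hg2 : ∀ c : k, g2 (algebraMap k (Matrix (Fin n) (Fin n) B) c) = algebraMap k T c)
    (hc : ∀ a : A, g1 (f a) = g2 (f a)) :
    (∀ i j : Fin n, i ≠ j →
        (∑ p, g1 (single p i 1) * g2 (single j p 1)) = 0) ∧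
    (∀ i j : Fin n,
        (∑ p, g1 (single p i 1) * g2 (single i p 1)) =
          ∑ p, g1 (single p j 1) * g2 (single j p 1)) ∧
    (∀ (b : B) (i : Fin n),
        g1 (diagonal fun _ => b) * (∑ p, g1 (single p i 1) * g2 (single i p 1)) =
          (∑ p, g1 (single p i 1) * g2 (single i p 1)) *
            g2 (diagonal fun _ => b)) := by
  classical
  -- abbreviations
  let σ : B → T := fun b => g1 (diagonal fun _ => b)
  let τ : B → T := fun b => g2 (diagonal fun _ => b)
  let X : Fin n → Fin n → T := fun i j =>
    ∑ p, g1 (single p i 1) * g2 (single j p 1)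
  -- the target algebra
  let D := Matrix (Fin 2) (Fin 2) T
  -- the B-component algebra map
  have hσmul : ∀ a b : B, σ (a * b) = σ a * σ b := fun a b => by
    show g1 _ = _
    rw [← _root_.map_mul, diagonal_mul_diagonal]
  have hτmul : ∀ a b : B, τ (a * b) = τ a * τ b := fun a b => by
    show g2 _ = _
    rw [← _root_.map_mul, diagonal_mul_diagonal]
  let gB : B →ₐ[k] D :=
    { toFun := fun b => diagonal ![σ b, τ b]
      map_one' := by
        show diagonal ![σ 1, τ 1] = 1
        have e1 : σ 1 = 1 := by show g1 _ = _; rw [diagonal_one, _root_.map_one]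
        have e2 : τ 1 = 1 := by show g2 _ = _; rw [diagonal_one, _root_.map_one]
        rw [e1, e2, show (![(1:T), 1] : Fin 2 → T) = fun _ => 1 from
          funext fun i => by fin_cases i <;> rfl, diagonal_one]
      map_mul' := fun a b => by
        show diagonal ![σ (a*b), τ (a*b)] = diagonal ![σ a, τ a] * diagonal ![σ b, τ b]
        rw [diagonal_mul_diagonal]
        rw [show (![σ (a*b), τ (a*b)] : Fin 2 → T) = fun i => ![σ a, τ a] i * ![σ b, τ b] i from
          funext fun i => by fin_cases i <;> simp [hσmul, hτmul]]
      map_zero' := by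
        show diagonal ![σ 0, τ 0] = 0
        have e1 : σ 0 = 0 := by show g1 _ = _; rw [diagonal_zero, _root_.map_zero]
        have e2 : τ 0 = 0 := by show g2 _ = _; rw [diagonal_zero, _root_.map_zero]
        rw [e1, e2, show (![(0:T), 0] : Fin 2 → T) = fun _ => 0 from
          funext fun i => by fin_cases i <;> rfl, diagonal_zero]
      map_add' := fun a b => by
        show diagonal ![σ (a+b), τ (a+b)] = diagonal ![σ a, τ a] + diagonal ![σ b, τ b]
        have e1 : σ (a+b) = σ a + σ b := by
          show g1 _ = _
          rw [show (diagonal fun _ => a + b : Matrix (Fin n) (Fin n) B)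
            = (diagonal fun _ => a) + diagonal fun _ => b from by
              rw [diagonal_add], _root_.map_add]
        have e2 : τ (a+b) = τ a + τ b := by
          show g2 _ = _
          rw [show (diagonal fun _ => a + b : Matrix (Fin n) (Fin n) B)
            = (diagonal fun _ => a) + diagonal fun _ => b from by
              rw [diagonal_add], _root_.map_add]
        rw [diagonal_add, e1, e2]
        rw [show (![σ a + σ b, τ a + τ b] : Fin 2 → T)
          = fun i => ![σ a, τ a] i + ![σ b, τ b] i from
          funext fun i => by fin_cases i <;> rfl]
      commutes' := fun c => by
        show diagonal ![σ (algebraMap k B c), τ (algebraMap k B c)] = algebraMap k D c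
        have e1 : σ (algebraMap k B c) = algebraMap k T c := by
          show g1 (diagonal fun _ => algebraMap k B c) = _
          rw [show (diagonal fun _ => algebraMap k B c : Matrix (Fin n) (Fin n) B)
              = algebraMap k (Matrix (Fin n) (Fin n) B) c from
              (Matrix.algebraMap_eq_diagonal c).symm]
          exact hg1 c
        have e2 : τ (algebraMap k B c) = algebraMap k T c := by
          show g2 (diagonal fun _ => algebraMap k B c) = _
          rw [show (diagonal fun _ => algebraMap k B c : Matrix (Fin n) (Fin n) B)
              = algebraMap k (Matrix (Fin n) (Fin n) B) c from
              (Matrix.algebraMap_eq_diagonal c).symm]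
          exact hg2 c
        rw [e1, e2, Matrix.algebraMap_eq_diagonal]
        rw [show (![algebraMap k T c, algebraMap k T c] : Fin 2 → T)
          = algebraMap k (Fin 2 → T) c from
          funext fun i => by fin_cases i <;> simp [Pi.algebraMap_apply]] }
  -- the intertwining relation for X
  have hIX : ∀ (a : A) (i j : Fin n),
      (∑ l, X i l * τ (f a l j)) = ∑ l, σ (f a i l) * X l j := by
    intro a i j
    have lhs_eq : (∑ l, X i l * τ (f a l j))
        = ∑ p, g1 (single p i 1) * (g2 (f a) * g2 (single j p 1)) := by
      calc (∑ l, X i l * τ (f a l j))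
          = ∑ l, ∑ p, (g1 (single p i 1) * g2 (single l p 1)) * τ (f a l j) := by
            simp only [X, Finset.sum_mul]
        _ = ∑ p, ∑ l, g1 (single p i 1) * (g2 (single l p 1) * τ (f a l j)) := by
            rw [Finset.sum_comm]
            exact Finset.sum_congr rfl fun p _ => Finset.sum_congr rfl fun l _ => mul_assoc _ _ _
        _ = ∑ p, g1 (single p i 1) * (g2 (f a) * g2 (single j p 1)) := by
            refine Finset.sum_congr rfl fun p _ => ?_
            rw [← Finset.mul_sum]
            congr 1
            have : ∀ l : Fin n, g2 (single l p 1) * τ (f a l j)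
                = g2 (single l p (f a l j)) := fun l => by
              show _ * g2 _ = _
              rw [← _root_.map_mul, std_mul_diag, one_mul]
            rw [Finset.sum_congr rfl fun l _ => this l, ← _root_.map_sum, sum_std_left, _root_.map_mul]
    have rhs_eq : (∑ l, σ (f a i l) * X l j)
        = ∑ p, g1 (single p i 1) * (g1 (f a) * g2 (single j p 1)) := by
      calc (∑ l, σ (f a i l) * X l j)
          = ∑ l, ∑ p, σ (f a i l) * (g1 (single p l 1) * g2 (single j p 1)) := by
            simp only [X, Finset.mul_sum]
        _ = ∑ p, ∑ l, (σ (f a i l) * g1 (single p l 1)) * g2 (single j p 1) := by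
            rw [Finset.sum_comm]
            exact Finset.sum_congr rfl fun p _ => Finset.sum_congr rfl fun l _ =>
              (mul_assoc _ _ _).symm
        _ = ∑ p, g1 (single p i 1) * (g1 (f a) * g2 (single j p 1)) := by
            refine Finset.sum_congr rfl fun p _ => ?_
            rw [← Finset.sum_mul]
            have : ∀ l : Fin n, σ (f a i l) * g1 (single p l 1)
                = g1 (single p l (f a i l)) := fun l => by
              show g1 _ * _ = _
              rw [← _root_.map_mul, diag_mul_std, mul_one]
            rw [Finset.sum_congr rfl fun l _ => this l, ← _root_.map_sum, sum_std_right, _root_.map_mul,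
              mul_assoc]
    rw [lhs_eq, rhs_eq, hc a]
  -- apply the universal property
  obtain ⟨h, ⟨hB, hV⟩, -⟩ := hUP D gB (fun i j => single 0 1 (X i j))
  have hπ : ∀ b, h (ιB b) = gB b := fun b => DFunLike.congr_fun hB b
  -- everything in the ideal is killed by h
  have hker : ∀ x ∈ commutatorIdeal ιB V f, h x = 0 := by
    intro x hx
    have hsub : {x : C | ∃ (a : A) (i j : Fin n),
        x = ∑ l, V i l * ιB (f a l j) - ∑ l, ιB (f a i l) * V l j}
        ⊆ (TwoSidedIdeal.ker h.toRingHom : Set C) := by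
      rintro y ⟨a, i, j, rfl⟩
      rw [SetLike.mem_coe, TwoSidedIdeal.mem_ker]
      show h _ = 0
      rw [_root_.map_sub, _root_.map_sum, _root_.map_sum]
      have e1 : ∀ l : Fin n, h (V i l * ιB (f a l j))
          = single 0 1 (X i l * τ (f a l j)) := fun l => by
        rw [_root_.map_mul, hV, hπ]
        show single 0 1 (X i l) * diagonal ![σ (f a l j), τ (f a l j)] = _
        rw [std_mul_diag]
        congr 1
      have e2 : ∀ l : Fin n, h (ιB (f a i l) * V l j)
          = single 0 1 (σ (f a i l) * X l j) := fun l => by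
        rw [_root_.map_mul, hV, hπ]
        show diagonal ![σ (f a i l), τ (f a i l)] * single 0 1 (X l j) = _
        rw [diag_mul_std]
        congr 1
      rw [Finset.sum_congr rfl fun l _ => e1 l, Finset.sum_congr rfl fun l _ => e2 l,
        sum_std, sum_std, hIX a i j, sub_self]
    exact (TwoSidedIdeal.mem_ker h.toRingHom).mp (TwoSidedIdeal.mem_span_iff.mp hx _ hsub)
  -- extract the relations
  have extract : ∀ s t : T, single (0 : Fin 2) (1 : Fin 2) s
      = single (0 : Fin 2) (1 : Fin 2) t → s = t := by
    intro s t hst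
    have := congrFun (congrFun hst 0) 1
    simpa [Matrix.single] using this
  refine ⟨?_, ?_, ?_⟩
  · intro i j hij
    have h0 := hker _ (h2 i j hij)
    rw [hV] at h0
    show X i j = 0
    exact extract _ _ (by rw [h0, Matrix.single_zero])
  · intro i j
    have h0 := hker _ (h1 i j)
    rw [_root_.map_sub, hV, hV, sub_eq_zero] at h0
    exact extract _ _ h0
  · intro b i
    have h0 := hker _ (h3 b i)
    rw [_root_.map_sub, _root_.map_mul, _root_.map_mul, hV, hπ, sub_eq_zero] at h0
    have hl : (gB b : D) * single 0 1 (X i i) = single 0 1 (σ b * X i i) := by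
      show diagonal ![σ b, τ b] * _ = _
      rw [diag_mul_std]
      congr 1
    have hr : single (0:Fin 2) (1:Fin 2) (X i i) * (gB b : D)
        = single 0 1 (X i i * τ b) := by
      show _ * diagonal ![σ b, τ b] = _
      rw [std_mul_diag]
      congr 1
    rw [hl, hr] at h0
    exact extract _ _ h0

open Matrix in
private lemma epi_aux {k A B C : Type u} [Field k]
    [Ring A] [Algebra k A] [Ring B] [Algebra k B] [Ring C] [Algebra k C] {n : ℕ}
    (ιB : B →ₐ[k] C) (V : Fin n → Fin n → C)
    (hUP : ∀ (D : Type u) [Ring D] [Algebra k D] (gB : B →ₐ[k] D) (w : Fin n → Fin n → D),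
      ∃! h : C →ₐ[k] D, h.comp ιB = gB ∧ ∀ i j, h (V i j) = w i j)
    (f : A →ₐ[k] Matrix (Fin n) (Fin n) B)
    (h1 : ∀ i j : Fin n, V i i - V j j ∈ commutatorIdeal ιB V f)
    (h2 : ∀ i j : Fin n, i ≠ j → V i j ∈ commutatorIdeal ιB V f)
    (h3 : ∀ (b : B) (i : Fin n), ιB b * V i i - V i i * ιB b ∈ commutatorIdeal ιB V f)
    (T : Type u) [Ring T] [Algebra k T]
    (g1 g2 : Matrix (Fin n) (Fin n) B →+* T)
    (hg1 : ∀ c : k, g1 (algebraMap k (Matrix (Fin n) (Fin n) B) c) = algebraMap k T c)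
    (hg2 : ∀ c : k, g2 (algebraMap k (Matrix (Fin n) (Fin n) B) c) = algebraMap k T c)
    (hc : ∀ a : A, g1 (f a) = g2 (f a)) : g1 = g2 := by
  classical
  rcases Nat.eq_zero_or_pos n with hn | hn
  · subst hn
    refine RingHom.ext fun x => ?_
    have hx : x = 0 := by ext i j; exact i.elim0
    rw [hx, _root_.map_zero, _root_.map_zero]
  obtain ⟨hX0, hXd, hXb⟩ := aux_rel ιB V hUP f h1 h2 h3 T g1 g2 hg1 hg2 hc
  obtain ⟨hY0, hYd, hYb⟩ := aux_rel ιB V hUP f h1 h2 h3 T g2 g1 hg2 hg1 (fun a => (hc a).symm)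
  set i0 : Fin n := ⟨0, hn⟩ with hi0
  let e : Fin n → Fin n → T := fun a b => g1 (single a b (1:B))
  let fM : Fin n → Fin n → T := fun a b => g2 (single a b (1:B))
  let X : Fin n → Fin n → T := fun i j => ∑ p, e p i * fM j p
  let Y : Fin n → Fin n → T := fun i j => ∑ p, fM p i * e j p
  have hX0' : ∀ i j : Fin n, i ≠ j → X i j = 0 := hX0
  have hXd' : ∀ i j : Fin n, X i i = X j j := hXd
  have hXb' : ∀ (b : B) (i : Fin n),
      g1 (diagonal fun _ => b) * X i i = X i i * g2 (diagonal fun _ => b) := hXb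
  have hY0' : ∀ i j : Fin n, i ≠ j → Y i j = 0 := hY0
  have hYd' : ∀ i j : Fin n, Y i i = Y j j := hYd
  let x : T := X i0 i0
  let y : T := Y i0 i0
  have hXval : ∀ i j : Fin n, X i j = if i = j then x else 0 := by
    intro i j
    by_cases h : i = j
    · subst h; rw [if_pos rfl]; exact hXd' i i0
    · rw [if_neg h]; exact hX0' i j h
  have hYval : ∀ i j : Fin n, Y i j = if i = j then y else 0 := by
    intro i j
    by_cases h : i = j
    · subst h; rw [if_pos rfl]; exact hYd' i i0
    · rw [if_neg h]; exact hY0' i j h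
  have keyX : ∀ a b i j : Fin n, e a b * X i j = e a i * fM j b := by
    intro a b i j
    show e a b * ∑ p, e p i * fM j p = _
    rw [Finset.mul_sum]
    rw [Finset.sum_eq_single b]
    · show g1 _ * (g1 _ * g2 _) = _
      rw [← mul_assoc, ← _root_.map_mul, single_mul_single_same, one_mul]
    · intro p _ hp
      show g1 _ * (g1 _ * g2 _) = 0
      rw [← mul_assoc, ← _root_.map_mul, single_mul_single_of_ne _ _ _ _ (Ne.symm hp), _root_.map_zero, zero_mul]
    · intro hmem; exact absurd (Finset.mem_univ b) hmem
  have keyY : ∀ a b i j : Fin n, fM a b * Y i j = fM a i * e j b := by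
    intro a b i j
    show fM a b * ∑ p, fM p i * e j p = _
    rw [Finset.mul_sum]
    rw [Finset.sum_eq_single b]
    · show g2 _ * (g2 _ * g1 _) = _
      rw [← mul_assoc, ← _root_.map_mul, single_mul_single_same, one_mul]
    · intro p _ hp
      show g2 _ * (g2 _ * g1 _) = 0
      rw [← mul_assoc, ← _root_.map_mul, single_mul_single_of_ne _ _ _ _ (Ne.symm hp), _root_.map_zero, zero_mul]
    · intro hmem; exact absurd (Finset.mem_univ b) hmem
  have hone1 : (1 : T) = ∑ a, e a a := by
    have := congrArg g1 (one_eq_sum_std (R := B) (m := Fin n))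
    rw [_root_.map_one, _root_.map_sum] at this
    exact this
  have hone2 : (1 : T) = ∑ a, fM a a := by
    have := congrArg g2 (one_eq_sum_std (R := B) (m := Fin n))
    rw [_root_.map_one, _root_.map_sum] at this
    exact this
  have step1 : ∀ j b : Fin n, fM j b = e j b * x := by
    intro j b
    calc fM j b = 1 * fM j b := (one_mul _).symm
      _ = (∑ a, e a a) * fM j b := by rw [← hone1]
      _ = ∑ a, e a a * fM j b := Finset.sum_mul _ _ _
      _ = ∑ a, e a b * X a j := Finset.sum_congr rfl fun a _ => (keyX a b a j).symm
      _ = e j b * x := by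
          rw [Finset.sum_eq_single j]
          · rw [hXval, if_pos rfl]
          · intro a _ ha
            rw [hXval, if_neg ha, mul_zero]
          · intro hmem; exact absurd (Finset.mem_univ j) hmem
  have step2 : ∀ j b : Fin n, e j b = fM j b * y := by
    intro j b
    calc e j b = 1 * e j b := (one_mul _).symm
      _ = (∑ a, fM a a) * e j b := by rw [← hone2]
      _ = ∑ a, fM a a * e j b := Finset.sum_mul _ _ _
      _ = ∑ a, fM a b * Y a j := Finset.sum_congr rfl fun a _ => (keyY a b a j).symm
      _ = fM j b * y := by
          rw [Finset.sum_eq_single j]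
          · rw [hYval, if_pos rfl]
          · intro a _ ha
            rw [hYval, if_neg ha, mul_zero]
          · intro hmem; exact absurd (Finset.mem_univ j) hmem
  have step3 : ∀ j b : Fin n, fM j b = fM j b * y := by
    intro j b
    calc fM j b = fM j b * 1 := (mul_one _).symm
      _ = fM j b * ∑ a, e a a := by rw [← hone1]
      _ = ∑ a, fM j b * e a a := Finset.mul_sum _ _ _
      _ = ∑ a, fM j a * Y b a := Finset.sum_congr rfl fun a _ => (keyY j a b a).symm
      _ = fM j b * y := by
          rw [Finset.sum_eq_single b]
          · rw [hYval, if_pos rfl]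
          · intro a _ ha
            rw [hYval, if_neg (Ne.symm ha), mul_zero]
          · intro hmem; exact absurd (Finset.mem_univ b) hmem
  have heqef : ∀ j b : Fin n, e j b = fM j b := fun j b =>
    (step2 j b).trans (step3 j b).symm
  have hx1 : x = 1 := by
    have hterm : ∀ b : Fin n, e b b = e b b * x := fun b => by
      conv_lhs => rw [heqef b b, step1 b b]
    calc x = 1 * x := (one_mul _).symm
      _ = (∑ b, e b b) * x := by rw [← hone1]
      _ = ∑ b, e b b * x := Finset.sum_mul _ _ _
      _ = ∑ b, e b b := (Finset.sum_congr rfl fun b _ => (hterm b).symm)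
      _ = 1 := hone1.symm
  have hst : ∀ b : B, g1 (diagonal fun _ => b) = g2 (diagonal fun _ => b) := by
    intro b
    have := hXb' b i0
    rw [show X i0 i0 = x from rfl, hx1, mul_one, one_mul] at this
    exact this
  refine RingHom.ext fun m => ?_
  rw [matrix_eq_sum_single m, _root_.map_sum, _root_.map_sum]
  refine Finset.sum_congr rfl fun a _ => ?_
  rw [_root_.map_sum, _root_.map_sum]
  refine Finset.sum_congr rfl fun b _ => ?_
  rw [show single a b (m a b)
      = (diagonal fun _ => m a b) * single a b (1:B) from by
    rw [diag_mul_std, mul_one]]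
  rw [_root_.map_mul, _root_.map_mul]
  exact congrArg₂ (· * ·) (hst _) (heqef a b)

set_option maxHeartbeats 1000000 in
open Matrix in
private lemma forward_dir {k A B C : Type u} [Field k]
    [Ring A] [Algebra k A] [Ring B] [Algebra k B] [Ring C] [Algebra k C] {n : ℕ}
    (ιB : B →ₐ[k] C) (V : Fin n → Fin n → C)
    (f : A →ₐ[k] Matrix (Fin n) (Fin n) B)
    (hepi : IsRingEpi f.toRingHom) :
    ((∀ i j : Fin n, V i i - V j j ∈ commutatorIdeal ιB V f) ∧
     (∀ i j : Fin n, i ≠ j → V i j ∈ commutatorIdeal ιB V f) ∧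
     (∀ (b : B) (i : Fin n),
        ιB b * V i i - V i i * ιB b ∈ commutatorIdeal ιB V f)) := by
  classical
  set I := commutatorIdeal ιB V f with hI
  let Q := I.ringCon.Quotient
  let π : C →+* Q := RingCon.mk' I.ringCon
  have hmem : ∀ z : C, z ∈ I ↔ π z = 0 := fun z => by
    conv_lhs => rw [← TwoSidedIdeal.ker_ringCon_mk' I]
    exact TwoSidedIdeal.mem_ker _
  have hgen : ∀ (a : A) (i j : Fin n),
      π (∑ l, V i l * ιB (f a l j)) = π (∑ l, ιB (f a i l) * V l j) := by
    intro a i j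
    have hmemgen : (∑ l, V i l * ιB (f a l j)) - (∑ l, ιB (f a i l) * V l j) ∈ I :=
      TwoSidedIdeal.subset_span ⟨a, i, j, rfl⟩
    have h0 := (hmem _).mp hmemgen
    rwa [_root_.map_sub, sub_eq_zero] at h0
  let φ : B →+* Q := π.comp ιB.toRingHom
  let G : Matrix (Fin n) (Fin n) B →+* Matrix (Fin n) (Fin n) Q := φ.mapMatrix
  let Wm : Matrix (Fin n) (Fin n) Q := Matrix.of fun i j => π (V i j)
  have hG : ∀ (m : Matrix (Fin n) (Fin n) B) (u v : Fin n), G m u v = π (ιB (m u v)) :=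
    fun m u v => rfl
  have hWf : ∀ a : A, Wm * G (f a) = G (f a) * Wm := by
    intro a
    ext i j
    rw [Matrix.mul_apply, Matrix.mul_apply]
    calc (∑ l, Wm i l * G (f a) l j) = ∑ l, π (V i l * ιB (f a l j)) := by
          refine Finset.sum_congr rfl fun l _ => ?_
          rw [hG, _root_.map_mul]
          rfl
      _ = π (∑ l, V i l * ιB (f a l j)) := (_root_.map_sum π _ _).symm
      _ = π (∑ l, ιB (f a i l) * V l j) := hgen a i j
      _ = ∑ l, π (ιB (f a i l) * V l j) := _root_.map_sum π _ _
      _ = ∑ l, G (f a) i l * Wm l j := by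
          refine Finset.sum_congr rfl fun l _ => ?_
          rw [hG, _root_.map_mul]
          rfl
  let T := Matrix (Fin 2) (Fin 2) (Matrix (Fin n) (Fin n) Q)
  let gD : Matrix (Fin n) (Fin n) B →+* T :=
    { toFun := fun m => diagonal fun _ => G m
      map_one' := by
        show (diagonal fun _ => G 1 : T) = 1
        rw [_root_.map_one]; exact diagonal_one
      map_mul' := fun p q => by
        show (diagonal fun _ => G (p * q) : T)
          = (diagonal fun _ => G p) * diagonal fun _ => G q
        rw [_root_.map_mul, ← diagonal_mul_diagonal]
      map_zero' := by
        show (diagonal fun _ => G 0 : T) = 0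
        rw [_root_.map_zero]; exact diagonal_zero
      map_add' := fun p q => by
        show (diagonal fun _ => G (p + q) : T)
          = (diagonal fun _ => G p) + diagonal fun _ => G q
        rw [_root_.map_add, ← diagonal_add] }
  let s : T := single 0 1 Wm
  have hss : s * s = 0 := single_mul_single_of_ne _ _ _ _ (by decide) _
  let U : T := 1 + s
  let U' : T := 1 - s
  have hUU' : U * U' = 1 := by
    show (1 + s) * (1 - s) = 1
    rw [add_mul, one_mul, mul_sub, mul_one, hss, sub_zero]
    abel
  have hU'U : U' * U = 1 := by
    show (1 - s) * (1 + s) = 1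
    rw [sub_mul, one_mul, mul_add, mul_one, hss, add_zero]
    abel
  have key : ∀ z w : T, (U * z * U') * (U * w * U') = U * (z * w) * U' := by
    intro z w
    have h1 : U' * (U * (w * U')) = w * U' := by rw [← mul_assoc, hU'U, one_mul]
    calc (U * z * U') * (U * w * U') = U * (z * (U' * (U * (w * U')))) := by
          simp only [mul_assoc]
      _ = U * (z * (w * U')) := by rw [h1]
      _ = U * (z * w) * U' := by simp only [mul_assoc]
  let g2' : Matrix (Fin n) (Fin n) B →+* T :=
    { toFun := fun m => U * gD m * U'
      map_one' := by
        show U * gD 1 * U' = 1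
        rw [_root_.map_one, mul_one, hUU']
      map_mul' := fun p q => by
        show U * gD (p * q) * U' = (U * gD p * U') * (U * gD q * U')
        rw [_root_.map_mul, ← key]
      map_zero' := by
        show U * gD 0 * U' = 0
        rw [_root_.map_zero, mul_zero, zero_mul]
      map_add' := fun p q => by
        show U * gD (p + q) * U' = (U * gD p * U') + (U * gD q * U')
        rw [_root_.map_add, mul_add, add_mul] }
  have hDiagU : ∀ M : Matrix (Fin n) (Fin n) Q, Wm * M = M * Wm →
      U * (diagonal fun _ => M) = (diagonal fun _ => M) * U := by
    intro M hM
    show (1 + s) * _ = _ * (1 + s)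
    rw [add_mul, one_mul, mul_add, mul_one]
    congr 1
    show single 0 1 Wm * diagonal _ = diagonal _ * single 0 1 Wm
    rw [std_mul_diag, diag_mul_std]
    exact congrArg _ hM
  have hcompeq : gD.comp f.toRingHom = g2'.comp f.toRingHom := by
    refine RingHom.ext fun a => ?_
    show gD (f a) = U * gD (f a) * U'
    have h0 : U * gD (f a) = gD (f a) * U := hDiagU (G (f a)) (hWf a)
    rw [h0, mul_assoc, hUU', mul_one]
  have heq : gD = g2' := hepi gD g2' hcompeq
  have hcom : ∀ m : Matrix (Fin n) (Fin n) B, Wm * G m = G m * Wm := by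
    intro m
    have h := RingHom.congr_fun heq m
    have h' : gD m = U * gD m * U' := h
    have h2 : U * gD m = gD m * U := by
      calc U * gD m = U * gD m * (U' * U) := by rw [hU'U, mul_one]
        _ = (U * gD m * U') * U := by rw [mul_assoc (U * gD m) U' U]
        _ = gD m * U := by rw [← h']
    have e1 : U * gD m = (diagonal fun _ => G m) + single 0 1 (Wm * G m) := by
      show (1 + s) * (diagonal fun _ => G m) = _
      rw [add_mul, one_mul]
      congr 1
      show single 0 1 Wm * diagonal _ = _
      rw [std_mul_diag]
    have e2 : gD m * U = (diagonal fun _ => G m) + single 0 1 (G m * Wm) := by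
      show (diagonal fun _ => G m) * (1 + s) = _
      rw [mul_add, mul_one]
      congr 1
      show diagonal _ * single 0 1 Wm = _
      rw [diag_mul_std]
    rw [e1, e2] at h2
    have h4 := add_left_cancel h2
    have h5 := congrFun (congrFun h4 0) 1
    simpa [Matrix.single] using h5
  have hGstd : ∀ (a b : Fin n) (r : B),
      G (single a b r) = single a b (φ r) := fun a b r => std_map φ a b r
  have hGdiag : ∀ r : B, G (diagonal fun _ => r) = diagonal fun _ => φ r := by
    intro r
    show (diagonal _).map φ = _
    rw [diagonal_map (_root_.map_zero φ)]
  refine ⟨?_, ?_, ?_⟩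
  · intro i j
    rw [hmem, _root_.map_sub, sub_eq_zero]
    have h := congrFun (congrFun (hcom (single i j 1)) i) j
    rw [hGstd, _root_.map_one] at h
    rw [Matrix.mul_single_apply_same, Matrix.single_mul_apply_same,
      mul_one, one_mul] at h
    exact h
  · intro i j hij
    rw [hmem]
    have h := congrFun (congrFun (hcom (single j j 1)) i) j
    rw [hGstd, _root_.map_one] at h
    rw [Matrix.mul_single_apply_same,
      Matrix.single_mul_apply_of_ne 1 j j i j hij, mul_one] at h
    exact h
  · intro b i
    rw [hmem, _root_.map_sub, sub_eq_zero, _root_.map_mul, _root_.map_mul]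
    have h := congrFun (congrFun (hcom (diagonal fun _ => b)) i) i
    rw [hGdiag, Matrix.mul_diagonal, Matrix.diagonal_mul] at h
    exact h.symm

/-- **Theorem `TEpimorphismIdeal`.** Let `f : A → Mₙ(B)` be a homomorphism of
`k`-algebras, and let `C` together with `ιB : B → C` and the elements `V i j` be the coproduct
`B *_k k⟨(v_{ij})⟩` (characterized by its universal property). Then `f` is a ring epimorphism
iff the ideal `I_f` generated by the entries of the commutators `V·f(a) − f(a)·V` (`a : A`)
contains `v_{ii} − v_{jj}`, `v_{i'j'}` for `i' ≠ j'`, and `b·v_{ii} − v_{ii}·b` for every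
`b : B`. -/
theorem stmt13 {k A B C : Type u} [Field k]
    [Ring A] [Algebra k A] [Ring B] [Algebra k B] [Ring C] [Algebra k C] {n : ℕ}
    (ιB : B →ₐ[k] C) (V : Fin n → Fin n → C)
    (hUP : ∀ (D : Type u) [Ring D] [Algebra k D] (gB : B →ₐ[k] D) (w : Fin n → Fin n → D),
      ∃! h : C →ₐ[k] D, h.comp ιB = gB ∧ ∀ i j, h (V i j) = w i j)
    (f : A →ₐ[k] Matrix (Fin n) (Fin n) B) :
    IsRingEpi f.toRingHom ↔
      ((∀ i j : Fin n, V i i - V j j ∈ commutatorIdeal ιB V f) ∧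
       (∀ i j : Fin n, i ≠ j → V i j ∈ commutatorIdeal ιB V f) ∧
       (∀ (b : B) (i : Fin n),
          ιB b * V i i - V i i * ιB b ∈ commutatorIdeal ιB V f)) := by
  constructor
  · exact forward_dir ιB V f
  · rintro ⟨h1, h2, h3⟩
    intro T _ g1 g2 hcomp
    let S := Subring.closure (Set.range g1 ∪ Set.range g2)
    have hm1 : ∀ m, g1 m ∈ S := fun m => Subring.subset_closure (Or.inl ⟨m, rfl⟩)
    have hm2 : ∀ m, g2 m ∈ S := fun m => Subring.subset_closure (Or.inr ⟨m, rfl⟩)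
    have halgeq : ∀ c : k, g1 (algebraMap k (Matrix (Fin n) (Fin n) B) c)
        = g2 (algebraMap k (Matrix (Fin n) (Fin n) B) c) := by
      intro c
      have h := RingHom.congr_fun hcomp (algebraMap k A c)
      rw [RingHom.comp_apply, RingHom.comp_apply,
        show f.toRingHom ((algebraMap k A) c)
          = algebraMap k (Matrix (Fin n) (Fin n) B) c from f.commutes c] at h
      exact h
    let g1' : Matrix (Fin n) (Fin n) B →+* S := g1.codRestrict S hm1
    let g2' : Matrix (Fin n) (Fin n) B →+* S := g2.codRestrict S hm2
    let φ : k →+* S := g1'.comp (algebraMap k (Matrix (Fin n) (Fin n) B))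
    have hcent : ∀ (c : k) (s : S), φ c * s = s * φ c := by
      rintro c ⟨t, ht⟩
      refine Subtype.ext ?_
      show g1 (algebraMap k (Matrix (Fin n) (Fin n) B) c) * t
        = t * g1 (algebraMap k (Matrix (Fin n) (Fin n) B) c)
      induction ht using Subring.closure_induction with
      | mem z hz =>
          rcases hz with ⟨m, rfl⟩ | ⟨m, rfl⟩
          · rw [← map_mul, ← map_mul]
            exact congrArg g1 (Algebra.commutes c m)
          · rw [halgeq c, ← map_mul, ← map_mul]
            exact congrArg g2 (Algebra.commutes c m)
      | zero => rw [mul_zero, zero_mul]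
      | one => rw [mul_one, one_mul]
      | add x y hx hy ihx ihy => rw [mul_add, add_mul, ihx, ihy]
      | neg x hx ihx => rw [mul_neg, neg_mul, ihx]
      | mul x y hx hy ihx ihy => rw [← mul_assoc, ihx, mul_assoc, ihy, mul_assoc]
    letI : Algebra k S := RingHom.toAlgebra' φ hcent
    have hg1' : ∀ c : k, g1' (algebraMap k (Matrix (Fin n) (Fin n) B) c) = algebraMap k S c :=
      fun c => rfl
    have hg2' : ∀ c : k, g2' (algebraMap k (Matrix (Fin n) (Fin n) B) c) = algebraMap k S c :=
      fun c => Subtype.ext (halgeq c).symm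
    have hc' : ∀ a : A, g1' (f a) = g2' (f a) :=
      fun a => Subtype.ext (RingHom.congr_fun hcomp a)
    have hmain := epi_aux ιB V hUP f h1 h2 h3 S g1' g2' hg1' hg2' hc'
    refine RingHom.ext fun m => ?_
    exact congrArg Subtype.val (RingHom.congr_fun hmain m)
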